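/- arXiv:2006.07217 — 2 statements merged into one kernel-verified Lean document; each statement's English description precedes it below -/
import Mathlib

section
/- Let S be a nonempty finite set, let ρ : S → ℝ be a strictly positive probability vector (ρ(x) > 0 for all x and ∑_x ρ(x) = 1), and let 0 < ε ≤ 1. Let s, s' ∈ S, let T_{ss'} ∈ [0,1], let p(s') > 0 satisfy |p(s') − ρ(s')| ≤ (ε/2)·(min_x ρ(x))², and set ν_t = T_{ss'}/p(s') and ν_∞ = T_{ss'}/ρ(s'). If ν̃ ∈ ℝ satisfies |ν_t − ν̃| < ε, then |ν̃ − ν_∞| ≤ 2ε. -/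
/-- Proposition 1 of the paper: closeness of the infoNCE scoring function to the
time-`t` ratio `ν_t = T/p`, together with closeness of the marginal `p` to the
stationary distribution `ρ`, implies closeness to the stationary ratio `ν_∞ = T/ρ s'`. -/
theorem prop1_scoring_close_to_stationary_ratio
    {S : Type*} [Fintype S] [Nonempty S]
    (ρ : S → ℝ) (hρpos : ∀ x, 0 < ρ x) (hρsum : ∑ x, ρ x = 1)
    (ε : ℝ) (hε0 : 0 < ε) (hε1 : ε ≤ 1)
    (s s' : S) (T : ℝ) (hT0 : 0 ≤ T) (hT1 : T ≤ 1)
    (p : ℝ) (hp : 0 < p)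
    (hclose : |p - ρ s'| ≤ ε / 2 * (Finset.univ.inf' Finset.univ_nonempty ρ) ^ 2)
    (ν : ℝ) (hν : |T / p - ν| < ε) :
    |ν - T / ρ s'| ≤ 2 * ε := by
  set m := Finset.univ.inf' Finset.univ_nonempty ρ with hm
  obtain ⟨x0, -, hx0⟩ := Finset.exists_mem_eq_inf' Finset.univ_nonempty ρ
  have hmpos : 0 < m := by rw [hm, hx0]; exact hρpos x0
  have hmle : m ≤ ρ s' := Finset.inf'_le _ (Finset.mem_univ s')
  have hρ' : 0 < ρ s' := hρpos s'
  have hρ'1 : ρ s' ≤ 1 := by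
    rw [← hρsum]
    exact Finset.single_le_sum (fun x _ => (hρpos x).le) (Finset.mem_univ s')
  have hm1 : m ≤ 1 := hmle.trans hρ'1
  have h1 : ρ s' - p ≤ ε / 2 * m ^ 2 := by
    have := (abs_le.mp hclose).1
    linarith
  have hprod : m ^ 2 / 2 ≤ p * ρ s' := by nlinarith [sq_nonneg m, mul_le_mul hε1 hm1 hmpos.le zero_le_one]
  have key : |T / p - T / ρ s'| ≤ ε := by
    have heq : T / p - T / ρ s' = T * (ρ s' - p) / (p * ρ s') := by field_simp
    rw [heq, abs_div, abs_of_pos (mul_pos hp hρ'), div_le_iff₀ (mul_pos hp hρ')]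
    have hnum : |T * (ρ s' - p)| ≤ ε / 2 * m ^ 2 := by
      rw [abs_mul, abs_of_nonneg hT0, abs_sub_comm]
      calc T * |p - ρ s'| ≤ 1 * (ε / 2 * m ^ 2) :=
            mul_le_mul hT1 hclose (abs_nonneg _) zero_le_one
        _ = ε / 2 * m ^ 2 := one_mul _
    calc |T * (ρ s' - p)| ≤ ε / 2 * m ^ 2 := hnum
      _ = ε * (m ^ 2 / 2) := by ring
      _ ≤ ε * (p * ρ s') := mul_le_mul_of_nonneg_left hprod hε0.le
  calc |ν - T / ρ s'| ≤ |ν - T / p| + |T / p - T / ρ s'| := abs_sub_le _ _ _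
    _ ≤ ε + ε := add_le_add (by rw [abs_sub_comm]; exact hν.le) key
    _ = 2 * ε := by ring
end

section
/- Let (q_i)_{i≥1} be a sequence of real numbers and let q_min, q_max be reals with 0 < q_min ≤ q_i ≤ q_max ≤ 1 for all i ≥ 1. Let X be the non-homogeneous geometric random variable with parameters (q_i), i.e. X takes value k ∈ {1,2,…} with probability P[X = k] = q_k · ∏_{i=1}^{k−1}(1 − q_i). Then the expectation E[X] = ∑_{k=1}^{∞} k · q_k · ∏_{i=1}^{k−1}(1 − q_i) satisfies 1/q_max ≤ E[X] ≤ 1/q_min. -/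
/-- Expectation bound for the non-homogeneous geometric distribution
(property (b) used by the paper's adaptive lookahead selection): if all
success probabilities `q_i` (for `i ≥ 1`) lie in `[q_min, q_max] ⊆ (0, 1]`,
then `1/q_max ≤ E[X] ≤ 1/q_min`, where
`E[X] = ∑_{k=1}^{∞} k · q_k · ∏_{i=1}^{k−1} (1 − q i)`. -/
theorem nhg_expectation_bounds
    (q : ℕ → ℝ) (qmin qmax : ℝ)
    (hqmin : 0 < qmin) (hqmax : qmax ≤ 1)
    (hq : ∀ i : ℕ, 1 ≤ i → qmin ≤ q i ∧ q i ≤ qmax) :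
    1 / qmax ≤ ∑' k : ℕ, (k : ℝ) * q k * ∏ i ∈ Finset.Icc 1 (k - 1), (1 - q i) ∧
      ∑' k : ℕ, (k : ℝ) * q k * ∏ i ∈ Finset.Icc 1 (k - 1), (1 - q i) ≤ 1 / qmin := by
  have hq1 : qmin ≤ qmax := le_trans (hq 1 le_rfl).1 (hq 1 le_rfl).2
  have hqmax0 : 0 < qmax := lt_of_lt_of_le hqmin hq1
  have hqmin1 : qmin ≤ 1 := le_trans hq1 hqmax
  set P : ℕ → ℝ := fun n => ∏ i ∈ Finset.Icc 1 n, (1 - q i) with hPdef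
  set a : ℕ → ℝ := fun k => (k : ℝ) * q k * P (k - 1) with hadef
  have hPub : ∀ n, P n ≤ (1 - qmin) ^ n := by
    intro n
    have : P n ≤ ∏ _i ∈ Finset.Icc 1 n, (1 - qmin) := by
      apply Finset.prod_le_prod
      · intro i hi
        have hi1 : 1 ≤ i := (Finset.mem_Icc.mp hi).1
        have := (hq i hi1).2
        linarith
      · intro i hi
        have hi1 : 1 ≤ i := (Finset.mem_Icc.mp hi).1
        have := (hq i hi1).1
        linarith
    simpa [Finset.prod_const, Nat.card_Icc] using this
  have hPlb : ∀ n, (1 - qmax) ^ n ≤ P n := by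
    intro n
    have : (∏ _i ∈ Finset.Icc 1 n, (1 - qmax)) ≤ P n := by
      apply Finset.prod_le_prod
      · intro i hi; linarith
      · intro i hi
        have hi1 : 1 ≤ i := (Finset.mem_Icc.mp hi).1
        have := (hq i hi1).2
        linarith
    simpa [Finset.prod_const, Nat.card_Icc] using this
  have hP0 : ∀ n, 0 ≤ P n := fun n => le_trans (pow_nonneg (by linarith) n) (hPlb n)
  have hr0 : 0 ≤ 1 - qmin := by linarith
  have hr1 : 1 - qmin < 1 := by linarith
  have hsumgeo : Summable (fun n : ℕ => (1 - qmin) ^ n) :=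
    summable_geometric_of_lt_one hr0 hr1
  have hsumP : Summable P := hsumgeo.of_nonneg_of_le hP0 hPub
  -- step relation
  have hPstep : ∀ n : ℕ, P (n + 1) = P n * (1 - q (n + 1)) := by
    intro n
    simp [hPdef, Finset.prod_Icc_succ_top (Nat.le_add_left 1 n)]
  -- partial sum identity
  have hps : ∀ n : ℕ, ∑ k ∈ Finset.range (n + 1), a k
      = (∑ k ∈ Finset.range n, P k) - (n : ℝ) * P n := by
    intro n
    induction n with
    | zero => simp [hadef]
    | succ n ih =>
        rw [Finset.sum_range_succ, ih, Finset.sum_range_succ]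
        have ha : a (n + 1) = ((n : ℝ) + 1) * (P n - P (n + 1)) := by
          have : P n - P (n + 1) = q (n + 1) * P n := by
            rw [hPstep n]; ring
          simp only [hadef, Nat.add_sub_cancel]
          rw [this]
          push_cast
          ring
        rw [ha]
        push_cast
        ring
  -- n * P n → 0
  have hnP : Filter.Tendsto (fun n : ℕ => (n : ℝ) * P n) Filter.atTop (nhds 0) := by
    have hs : Summable (fun n : ℕ => (n : ℝ) * (1 - qmin) ^ n) := by
      have := summable_pow_mul_geometric_of_norm_lt_one 1
        (r := (1 - qmin)) (by rw [Real.norm_eq_abs, abs_of_nonneg hr0]; exact hr1)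
      simpa using this
    have h0 : Filter.Tendsto (fun n : ℕ => (n : ℝ) * (1 - qmin) ^ n)
        Filter.atTop (nhds 0) := hs.tendsto_atTop_zero
    apply squeeze_zero
    · intro n; exact mul_nonneg (Nat.cast_nonneg n) (hP0 n)
    · intro n; exact mul_le_mul_of_nonneg_left (hPub n) (Nat.cast_nonneg n)
    · exact h0
  -- HasSum a (∑' P)
  have ha0 : ∀ k, 0 ≤ a k := by
    intro k
    rcases Nat.eq_zero_or_pos k with h | h
    · simp [hadef, h]
    · exact mul_nonneg (mul_nonneg (Nat.cast_nonneg k)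
        (le_trans (le_of_lt hqmin) (hq k h).1)) (hP0 _)
  have hHas : HasSum a (∑' n, P n) := by
    rw [hasSum_iff_tendsto_nat_of_nonneg ha0]
    have h1 : Filter.Tendsto (fun n : ℕ => ∑ k ∈ Finset.range (n + 1), a k)
        Filter.atTop (nhds (∑' n, P n)) := by
      simp only [hps]
      have := (hsumP.hasSum.tendsto_sum_nat).sub hnP
      simpa using this
    exact (Filter.tendsto_add_atTop_iff_nat 1).mp h1
  have htsum : (∑' k : ℕ, (k : ℝ) * q k * ∏ i ∈ Finset.Icc 1 (k - 1), (1 - q i))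
      = ∑' n, P n := hHas.tsum_eq
  rw [htsum]
  constructor
  · have hs0 : 0 ≤ 1 - qmax := by linarith
    have hs1 : 1 - qmax < 1 := by linarith
    have hgeo : Summable (fun n : ℕ => (1 - qmax) ^ n) :=
      summable_geometric_of_lt_one hs0 hs1
    have hle : (∑' n : ℕ, (1 - qmax) ^ n) ≤ ∑' n, P n :=
      Summable.tsum_le_tsum hPlb hgeo hsumP
    have hval : (∑' n : ℕ, (1 - qmax) ^ n) = 1 / qmax := by
      rw [tsum_geometric_of_lt_one hs0 hs1]
      rw [sub_sub_cancel, one_div]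
    linarith [hle, hval.symm.le]
  · have hle : (∑' n, P n) ≤ ∑' n : ℕ, (1 - qmin) ^ n :=
      Summable.tsum_le_tsum hPub hsumP hsumgeo
    have hval : (∑' n : ℕ, (1 - qmin) ^ n) = 1 / qmin := by
      rw [tsum_geometric_of_lt_one hr0 hr1]
      rw [sub_sub_cancel, one_div]
    linarith
end
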